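/- (Open-loop convergence, Theorem 1, part 1.) Let (Ω, F, P) be a probability space with a filtration (F_k)_{k∈ℕ}, and let (ρ_k)_{k∈ℕ} be an adapted D-valued process such that for every k and every bounded measurable f : D → ℝ, E[f(ρ_{k+1}) | F_k] = Σ_{μ : p_{μ,ρ_k} > 0} p_{μ,ρ_k} f(𝕄_μ(ρ_k)) almost surely. Under the QND assumption and the distinguishability assumption, with probability one the sequence ρ_k converges (entrywise) to a limit of the form |n⟩⟨n| for some n ∈ {1,…,d}. -/

import Mathlib

open Matrix MeasureTheory Filter BigOperators Topology
open scoped ComplexOrder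

/-- The (Borel) measurable space structure on matrices, coming from the product structure. -/
noncomputable instance matrixMeasurableSpace {d : ℕ} :
    MeasurableSpace (Matrix (Fin d) (Fin d) ℂ) :=
  (inferInstance : MeasurableSpace (Fin d → Fin d → ℂ))

/-- `p_{μ,ρ} = tr(M_μ ρ M_μ†)` (a real number since `ρ` is positive semidefinite). -/
noncomputable def pMeas {d m : ℕ} (M : Fin m → Matrix (Fin d) (Fin d) ℂ)
    (ρ : Matrix (Fin d) (Fin d) ℂ) (μ : Fin m) : ℝ :=
  ((M μ * ρ * (M μ)ᴴ).trace).re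

/-- `𝕄_μ(ρ) = M_μ ρ M_μ† / tr(M_μ ρ M_μ†)`. -/
noncomputable def MMap {d m : ℕ} (M : Fin m → Matrix (Fin d) (Fin d) ℂ)
    (μ : Fin m) (ρ : Matrix (Fin d) (Fin d) ℂ) : Matrix (Fin d) (Fin d) ℂ :=
  ((pMeas M ρ μ : ℂ))⁻¹ • (M μ * ρ * (M μ)ᴴ)

/-! ### Auxiliary deterministic lemmas -/

lemma psd_diag_nonneg' {d : ℕ} {A : Matrix (Fin d) (Fin d) ℂ} (hA : A.PosSemidef) (n : Fin d) :
    0 ≤ (A n n).re := by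
  have h := hA.re_dotProduct_nonneg (Pi.single n 1)
  simpa [Matrix.mulVec_single, single_dotProduct, Pi.single_star, star_one,
    dotProduct, Pi.single_apply, Finset.sum_ite_eq] using h

lemma psd_entry_sq {d : ℕ} {A : Matrix (Fin d) (Fin d) ℂ} (hA : A.PosSemidef) {i j : Fin d}
    (hij : i ≠ j) : Complex.normSq (A i j) ≤ (A i i).re * (A j j).re := by
  have hq : ∀ a b : ℂ, 0 ≤ Complex.normSq a * (A i i).re + Complex.normSq b * (A j j).re
      + 2 * ((starRingEnd ℂ) a * b * A i j).re := by
    intro a b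
    have h := hA.re_dotProduct_nonneg
      (a • (Pi.single i 1 : Fin d → ℂ) + b • (Pi.single j 1 : Fin d → ℂ))
    have hsym : A j i = (starRingEnd ℂ) (A i j) := by
      have := hA.isHermitian; rw [← this.apply j i]; rfl
    simp only [star_add, star_smul] at h
    rw [show (star (Pi.single i 1) : Fin d → ℂ) = Pi.single i 1 by rw [← Pi.single_star]; simp,
        show (star (Pi.single j 1) : Fin d → ℂ) = Pi.single j 1 by rw [← Pi.single_star]; simp] at h
    simp only [Matrix.mulVec_add, Matrix.mulVec_smul, Matrix.mulVec_single_one, Matrix.col_apply, mul_one,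
      add_dotProduct, smul_dotProduct, dotProduct_add,
      dotProduct_smul, single_dotProduct, one_mul, smul_eq_mul] at h
    rw [hsym] at h
    simp only [RCLike.re_to_complex, Complex.star_def, Complex.add_re, Complex.add_im,
      Complex.mul_re, Complex.mul_im, Complex.conj_re, Complex.conj_im,
      Complex.normSq_apply] at h ⊢
    ring_nf at h ⊢
    linarith
  have key : ∀ t : ℝ, 0 ≤ (A i i).re * t^2 - 2 * t * Complex.normSq (A i j)
      + (A j j).re * Complex.normSq (A i j) := by
    intro t
    have h := hq (t:ℂ) (-((starRingEnd ℂ) (A i j)))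
    simp only [Complex.normSq_ofReal, Complex.normSq_neg, Complex.normSq_conj] at h
    have hre : ((starRingEnd ℂ) (t:ℂ) * -((starRingEnd ℂ) (A i j)) * A i j).re
        = -(t * Complex.normSq (A i j)) := by
      rw [Complex.conj_ofReal]
      have : (t:ℂ) * -((starRingEnd ℂ) (A i j)) * A i j
          = -(t * (A i j * (starRingEnd ℂ) (A i j))) := by ring
      rw [this, Complex.mul_conj]
      simp [Complex.ofReal_mul]
    rw [hre] at h
    nlinarith [h]
  have hii := psd_diag_nonneg' hA i
  have hjj := psd_diag_nonneg' hA j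
  set N := Complex.normSq (A i j) with hN
  have hN0 : 0 ≤ N := Complex.normSq_nonneg _
  rcases eq_or_lt_of_le hN0 with h0 | hpos
  · nlinarith
  rcases eq_or_lt_of_le hii with hii0 | hiipos
  · exfalso
    have h := key ((A j j).re / 2 + 1)
    rw [← hii0] at h
    nlinarith
  · set t := N / (A i i).re with ht
    have h := key t
    have hdiv : (A i i).re * t = N := mul_div_cancel₀ _ (ne_of_gt hiipos)
    have h2 : 0 ≤ (A i i).re * ((A i i).re * t^2 - 2*t*N + (A j j).re * N) :=
      mul_nonneg hiipos.le h
    have h3 : ((A i i).re * t)^2 = N^2 := by rw [hdiv]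
    nlinarith [h2, h3]

section comp
variable {d m : ℕ} {M : Fin m → Matrix (Fin d) (Fin d) ℂ} {c : Fin m → Fin d → ℂ}

lemma entry_MrM (hQND : ∀ μ, M μ = Matrix.diagonal (c μ)) (μ : Fin m)
    (ρ : Matrix (Fin d) (Fin d) ℂ) (i j : Fin d) :
    (M μ * ρ * (M μ)ᴴ) i j = c μ i * ρ i j * (starRingEnd ℂ) (c μ j) := by
  rw [hQND, Matrix.diagonal_conjTranspose, Matrix.mul_diagonal, Matrix.diagonal_mul]
  simp [Pi.star_apply, RCLike.star_def, mul_assoc]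

lemma pMeas_eq (hQND : ∀ μ, M μ = Matrix.diagonal (c μ)) (μ : Fin m)
    (ρ : Matrix (Fin d) (Fin d) ℂ) :
    pMeas M ρ μ = ∑ n, Complex.normSq (c μ n) * (ρ n n).re := by
  unfold pMeas
  rw [Matrix.trace, Complex.re_sum]
  congr 1; funext n
  rw [Matrix.diag_apply, entry_MrM hQND]
  rw [show c μ n * ρ n n * (starRingEnd ℂ) (c μ n)
      = (c μ n * (starRingEnd ℂ) (c μ n)) * ρ n n by ring, Complex.mul_conj]
  exact Complex.re_ofReal_mul _ _

lemma sum_a_eq_one (hQND : ∀ μ, M μ = Matrix.diagonal (c μ))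
    (hKraus : ∑ μ, (M μ)ᴴ * M μ = 1) (n : Fin d) :
    ∑ μ, Complex.normSq (c μ n) = 1 := by
  have h := congrArg (fun A : Matrix (Fin d) (Fin d) ℂ => (A n n).re) hKraus
  simp only [Matrix.sum_apply] at h
  have hterm : ∀ μ : Fin m, ((M μ)ᴴ * M μ) n n = (Complex.normSq (c μ n) : ℂ) := by
    intro μ
    rw [hQND, Matrix.diagonal_conjTranspose, Matrix.diagonal_mul_diagonal,
      Matrix.diagonal_apply_eq]
    simp [Pi.star_apply, RCLike.star_def, ← Complex.normSq_eq_conj_mul_self]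
  simp only [hterm] at h
  simpa [Complex.re_sum, Matrix.one_apply_eq] using h

lemma sum_diag_re {ρ : Matrix (Fin d) (Fin d) ℂ} (htr : ρ.trace = 1) :
    ∑ n, (ρ n n).re = 1 := by
  have h := congrArg Complex.re htr
  simpa [Matrix.trace, Complex.re_sum, Matrix.diag_apply] using h

lemma diag_le_one {ρ : Matrix (Fin d) (Fin d) ℂ} (hρ : ρ.PosSemidef) (htr : ρ.trace = 1)
    (n : Fin d) : (ρ n n).re ≤ 1 := by
  rw [← sum_diag_re htr]
  exact Finset.single_le_sum (fun i _ => psd_diag_nonneg' hρ i) (Finset.mem_univ n)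

lemma pMeas_nonneg (hQND : ∀ μ, M μ = Matrix.diagonal (c μ)) (μ : Fin m)
    {ρ : Matrix (Fin d) (Fin d) ℂ} (hρ : ρ.PosSemidef) : 0 ≤ pMeas M ρ μ := by
  rw [pMeas_eq hQND]
  exact Finset.sum_nonneg fun n _ =>
    mul_nonneg (Complex.normSq_nonneg _) (psd_diag_nonneg' hρ n)

lemma term_le_pMeas (hQND : ∀ μ, M μ = Matrix.diagonal (c μ)) (μ : Fin m)
    {ρ : Matrix (Fin d) (Fin d) ℂ} (hρ : ρ.PosSemidef) (n : Fin d) :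
    Complex.normSq (c μ n) * (ρ n n).re ≤ pMeas M ρ μ := by
  rw [pMeas_eq hQND]
  exact Finset.single_le_sum (fun i _ =>
    mul_nonneg (Complex.normSq_nonneg _) (psd_diag_nonneg' hρ i)) (Finset.mem_univ n)

lemma MMap_diag_re (hQND : ∀ μ, M μ = Matrix.diagonal (c μ)) (μ : Fin m)
    (ρ : Matrix (Fin d) (Fin d) ℂ) (n : Fin d) :
    ((MMap M μ ρ) n n).re = (pMeas M ρ μ)⁻¹ * (Complex.normSq (c μ n) * (ρ n n).re) := by
  unfold MMap
  rw [Matrix.smul_apply, ← Complex.ofReal_inv, smul_eq_mul, Complex.re_ofReal_mul,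
    entry_MrM hQND]
  congr 1
  rw [show c μ n * ρ n n * (starRingEnd ℂ) (c μ n)
      = (c μ n * (starRingEnd ℂ) (c μ n)) * ρ n n by ring, Complex.mul_conj]
  exact Complex.re_ofReal_mul _ _

end comp

instance matrixPseudoMetrizable {d : ℕ} :
    TopologicalSpace.PseudoMetrizableSpace (Matrix (Fin d) (Fin d) ℂ) :=
  (inferInstance : TopologicalSpace.PseudoMetrizableSpace (Fin d → Fin d → ℂ))

instance matrixBorelSpace {d : ℕ} : BorelSpace (Matrix (Fin d) (Fin d) ℂ) :=
  (inferInstance : BorelSpace (Fin d → Fin d → ℂ))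

/-- clamped diagonal entry -/
noncomputable def gcl {d : ℕ} (n : Fin d) (ρ : Matrix (Fin d) (Fin d) ℂ) : ℝ :=
  max 0 (min 1 ((ρ n n).re))

noncomputable def hcl {d : ℕ} (n₁ n₂ : Fin d) (ρ : Matrix (Fin d) (Fin d) ℂ) : ℝ :=
  Real.sqrt (gcl n₁ ρ * gcl n₂ ρ)

lemma gcl_nonneg {d : ℕ} {n : Fin d} {ρ : Matrix (Fin d) (Fin d) ℂ} : 0 ≤ gcl n ρ := le_max_left _ _

lemma gcl_le_one {d : ℕ} {n : Fin d} {ρ : Matrix (Fin d) (Fin d) ℂ} : gcl n ρ ≤ 1 :=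
  max_le zero_le_one (min_le_left _ _)

lemma gcl_eq {d : ℕ} {n : Fin d} {ρ : Matrix (Fin d) (Fin d) ℂ} (h0 : 0 ≤ (ρ n n).re) (h1 : (ρ n n).re ≤ 1) :
    gcl n ρ = (ρ n n).re := by
  unfold gcl; rw [min_eq_right h1, max_eq_right h0]

lemma hcl_nonneg {d : ℕ} {n₁ n₂ : Fin d} {ρ : Matrix (Fin d) (Fin d) ℂ} : 0 ≤ hcl n₁ n₂ ρ := Real.sqrt_nonneg _

lemma hcl_le_one {d : ℕ} {n₁ n₂ : Fin d} {ρ : Matrix (Fin d) (Fin d) ℂ} : hcl n₁ n₂ ρ ≤ 1 := by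
  unfold hcl
  rw [show (1:ℝ) = Real.sqrt 1 by simp]
  refine Real.sqrt_le_sqrt ?_
  have h1 : gcl n₁ ρ ≤ 1 := gcl_le_one
  have h2 : gcl n₂ ρ ≤ 1 := gcl_le_one
  have h3 : (0:ℝ) ≤ gcl n₁ ρ := gcl_nonneg
  have h4 : (0:ℝ) ≤ gcl n₂ ρ := gcl_nonneg
  nlinarith

lemma meas_entry {d : ℕ} (i j : Fin d) :
    Measurable (fun ρ : Matrix (Fin d) (Fin d) ℂ => ρ i j) :=
  (measurable_pi_apply j).comp (measurable_pi_apply i)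

lemma meas_entry_re {d : ℕ} (i j : Fin d) :
    Measurable (fun ρ : Matrix (Fin d) (Fin d) ℂ => (ρ i j).re) :=
  Complex.measurable_re.comp (meas_entry i j)

lemma gcl_measurable {d : ℕ} (n : Fin d) : Measurable (gcl n) :=
  measurable_const.max (measurable_const.min (meas_entry_re n n))

lemma hcl_measurable {d : ℕ} (n₁ n₂ : Fin d) : Measurable (hcl n₁ n₂) :=
  Real.continuous_sqrt.measurable.comp ((gcl_measurable n₁).mul (gcl_measurable n₂))

section comp2
variable {d m : ℕ} {M : Fin m → Matrix (Fin d) (Fin d) ℂ} {c : Fin m → Fin d → ℂ}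

lemma markov_g (hQND : ∀ μ, M μ = Matrix.diagonal (c μ))
    (hKraus : ∑ μ, (M μ)ᴴ * M μ = 1)
    {ρ : Matrix (Fin d) (Fin d) ℂ} (hρ : ρ.PosSemidef) (n : Fin d) :
    (∑ μ, if 0 < pMeas M ρ μ then pMeas M ρ μ * gcl n (MMap M μ ρ) else 0)
      = (ρ n n).re := by
  have key : ∀ μ, (if 0 < pMeas M ρ μ then pMeas M ρ μ * gcl n (MMap M μ ρ) else 0)
      = Complex.normSq (c μ n) * (ρ n n).re := by
    intro μ
    by_cases hp : 0 < pMeas M ρ μ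
    · rw [if_pos hp]
      have hle := term_le_pMeas hQND μ hρ n
      have hg : gcl n (MMap M μ ρ)
          = (pMeas M ρ μ)⁻¹ * (Complex.normSq (c μ n) * (ρ n n).re) := by
        rw [gcl_eq, MMap_diag_re hQND]
        · rw [MMap_diag_re hQND]
          exact mul_nonneg (inv_nonneg.mpr hp.le)
            (mul_nonneg (Complex.normSq_nonneg _) (psd_diag_nonneg' hρ n))
        · rw [MMap_diag_re hQND, ← div_eq_inv_mul]
          exact div_le_one_of_le₀ hle hp.le
      rw [hg, ← mul_assoc, mul_inv_cancel₀ (ne_of_gt hp), one_mul]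
    · rw [if_neg hp]
      have hp0 : pMeas M ρ μ = 0 :=
        le_antisymm (not_lt.mp hp) (pMeas_nonneg hQND μ hρ)
      have hle := term_le_pMeas hQND μ hρ n
      have hnn : 0 ≤ Complex.normSq (c μ n) * (ρ n n).re :=
        mul_nonneg (Complex.normSq_nonneg _) (psd_diag_nonneg' hρ n)
      rw [hp0] at hle
      linarith
  rw [Finset.sum_congr rfl (fun μ _ => key μ), ← Finset.sum_mul,
    sum_a_eq_one hQND hKraus, one_mul]

lemma markov_h (hQND : ∀ μ, M μ = Matrix.diagonal (c μ))
    {ρ : Matrix (Fin d) (Fin d) ℂ} (hρ : ρ.PosSemidef) (htr : ρ.trace = 1) (n₁ n₂ : Fin d) :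
    (∑ μ, if 0 < pMeas M ρ μ then pMeas M ρ μ * hcl n₁ n₂ (MMap M μ ρ) else 0)
      ≤ (∑ μ, Real.sqrt (Complex.normSq (c μ n₁)) * Real.sqrt (Complex.normSq (c μ n₂)))
          * hcl n₁ n₂ ρ := by
  have hρ1 : hcl n₁ n₂ ρ = Real.sqrt ((ρ n₁ n₁).re * (ρ n₂ n₂).re) := by
    unfold hcl
    rw [gcl_eq (psd_diag_nonneg' hρ n₁) (diag_le_one hρ htr n₁),
      gcl_eq (psd_diag_nonneg' hρ n₂) (diag_le_one hρ htr n₂)]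
  rw [hρ1, Finset.sum_mul]
  apply Finset.sum_le_sum
  intro μ _
  by_cases hp : 0 < pMeas M ρ μ
  · rw [if_pos hp]
    have hg : ∀ n, gcl n (MMap M μ ρ)
        = (pMeas M ρ μ)⁻¹ * (Complex.normSq (c μ n) * (ρ n n).re) := by
      intro n
      rw [gcl_eq, MMap_diag_re hQND]
      · rw [MMap_diag_re hQND]
        exact mul_nonneg (inv_nonneg.mpr hp.le)
          (mul_nonneg (Complex.normSq_nonneg _) (psd_diag_nonneg' hρ n))
      · rw [MMap_diag_re hQND, ← div_eq_inv_mul]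
        exact div_le_one_of_le₀ (term_le_pMeas hQND μ hρ n) hp.le
    unfold hcl
    rw [hg n₁, hg n₂]
    set p := pMeas M ρ μ
    set a₁ := Complex.normSq (c μ n₁)
    set a₂ := Complex.normSq (c μ n₂)
    set q₁ := (ρ n₁ n₁).re
    set q₂ := (ρ n₂ n₂).re
    have hq₁ : 0 ≤ q₁ := psd_diag_nonneg' hρ n₁
    have hq₂ : 0 ≤ q₂ := psd_diag_nonneg' hρ n₂
    have ha₁ : 0 ≤ a₁ := Complex.normSq_nonneg _
    have ha₂ : 0 ≤ a₂ := Complex.normSq_nonneg _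
    have harg : p⁻¹ * (a₁ * q₁) * (p⁻¹ * (a₂ * q₂))
        = (p⁻¹ * p⁻¹) * ((a₁ * a₂) * (q₁ * q₂)) := by ring
    rw [harg]
    rw [Real.sqrt_mul (by positivity : (0:ℝ) ≤ p⁻¹ * p⁻¹),
      Real.sqrt_mul_self (by positivity : (0:ℝ) ≤ p⁻¹),
      Real.sqrt_mul (by positivity : (0:ℝ) ≤ a₁ * a₂), Real.sqrt_mul ha₁]
    have hpp : p * p⁻¹ = 1 := mul_inv_cancel₀ (ne_of_gt hp)
    rw [← mul_assoc, hpp, one_mul]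
  · rw [if_neg hp]
    positivity

end comp2

lemma gamma_lt_one {m : ℕ} {a b : Fin m → ℝ} (ha : ∀ μ, 0 ≤ a μ) (hb : ∀ μ, 0 ≤ b μ)
    (hsa : ∑ μ, a μ = 1) (hsb : ∑ μ, b μ = 1) (hne : ∃ μ, a μ ≠ b μ) :
    ∑ μ, Real.sqrt (a μ) * Real.sqrt (b μ) < 1 := by
  obtain ⟨μ₀, hμ₀⟩ := hne
  have key : ∀ μ, Real.sqrt (a μ) * Real.sqrt (b μ) ≤ (a μ + b μ) / 2 := by
    intro μ
    nlinarith [sq_nonneg (Real.sqrt (a μ) - Real.sqrt (b μ)), Real.sq_sqrt (ha μ),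
      Real.sq_sqrt (hb μ)]
  have kstrict : Real.sqrt (a μ₀) * Real.sqrt (b μ₀) < (a μ₀ + b μ₀) / 2 := by
    have hs : Real.sqrt (a μ₀) ≠ Real.sqrt (b μ₀) := by
      intro h
      exact hμ₀ (by rw [← Real.sq_sqrt (ha μ₀), ← Real.sq_sqrt (hb μ₀), h])
    have h0 : Real.sqrt (a μ₀) - Real.sqrt (b μ₀) ≠ 0 := sub_ne_zero.mpr hs
    have : 0 < (Real.sqrt (a μ₀) - Real.sqrt (b μ₀))^2 := by positivity
    nlinarith [Real.sq_sqrt (ha μ₀), Real.sq_sqrt (hb μ₀)]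
  calc ∑ μ, Real.sqrt (a μ) * Real.sqrt (b μ) < ∑ μ, (a μ + b μ) / 2 :=
        Finset.sum_lt_sum (fun μ _ => key μ) ⟨μ₀, Finset.mem_univ μ₀, kstrict⟩
    _ = 1 := by rw [← Finset.sum_div, Finset.sum_add_distrib, hsa, hsb]; norm_num

/-- Open-loop convergence, Theorem 1, part 1: under the QND and
distinguishability assumptions, the open-loop measurement process converges almost surely
(entrywise) to some basis projector `|n⟩⟨n|`. -/
theorem stmt_5 (d m : ℕ) (hd : 1 ≤ d) (hm : 1 ≤ m)
    (M : Fin m → Matrix (Fin d) (Fin d) ℂ) (c : Fin m → Fin d → ℂ)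
    (hQND : ∀ μ, M μ = Matrix.diagonal (c μ))
    (hKraus : ∑ μ, (M μ)ᴴ * M μ = 1)
    (hdist : ∀ n₁ n₂ : Fin d, n₁ ≠ n₂ →
      ∃ μ, Complex.normSq (c μ n₁) ≠ Complex.normSq (c μ n₂))
    (Ω : Type*) (m0 : MeasurableSpace Ω) (P : Measure Ω) [IsProbabilityMeasure P]
    (ℱ : Filtration ℕ m0)
    (X : ℕ → Ω → Matrix (Fin d) (Fin d) ℂ)
    (hadapted : Adapted ℱ X)
    (hD : ∀ k ω, (X k ω).PosSemidef ∧ (X k ω).trace = 1)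
    (hmarkov : ∀ (k : ℕ) (f : Matrix (Fin d) (Fin d) ℂ → ℝ), Measurable f →
      (∃ C, ∀ ρ, |f ρ| ≤ C) →
      P[(fun ω => f (X (k + 1) ω)) | ℱ k] =ᵐ[P]
        fun ω => ∑ μ, if 0 < pMeas M (X k ω) μ then
          pMeas M (X k ω) μ * f (MMap M μ (X k ω)) else 0) :
    ∀ᵐ ω ∂P, ∃ n : Fin d,
      Tendsto (fun k => X k ω) atTop (nhds (Matrix.single n n 1)) := by
  classical
  -- measurability of the process w.r.t. the ambient σ-algebra
  have hXmeas : ∀ k, Measurable[m0] (X k) :=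
    fun k => (hadapted k).mono (ℱ.le k) le_rfl
  -- the diagonal processes
  set Y : Fin d → ℕ → Ω → ℝ := fun n k ω => ((X k ω) n n).re with hY
  -- Step A : each Y n is a bounded martingale, hence converges a.s.
  have hYconv : ∀ n : Fin d, ∀ᵐ ω ∂P,
      Tendsto (fun k => Y n k ω) atTop (𝓝 (ℱ.limitProcess (Y n) P ω)) := by
    intro n
    have hgb : ∀ ρ : Matrix (Fin d) (Fin d) ℂ, |gcl n ρ| ≤ 1 := fun ρ => by
      rw [abs_of_nonneg gcl_nonneg]; exact gcl_le_one
    have hYeq : ∀ k, (fun ω => gcl n (X k ω)) = Y n k := by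
      intro k
      funext ω
      exact gcl_eq (psd_diag_nonneg' (hD k ω).1 n) (diag_le_one (hD k ω).1 (hD k ω).2 n)
    have hadp : StronglyAdapted ℱ (Y n) := fun k =>
      ((meas_entry_re n n).comp (hadapted k)).stronglyMeasurable
    have hYb : ∀ k ω, ‖Y n k ω‖ ≤ 1 := by
      intro k ω
      rw [Real.norm_eq_abs, abs_of_nonneg (psd_diag_nonneg' (hD k ω).1 n)]
      exact diag_le_one (hD k ω).1 (hD k ω).2 n
    have hint : ∀ k, Integrable (Y n k) P := fun k =>
      Integrable.mono' (integrable_const 1)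
        ((meas_entry_re n n).comp (hXmeas k)).aestronglyMeasurable
        (Filter.Eventually.of_forall fun ω => hYb k ω)
    have hcond : ∀ k, Y n k =ᵐ[P] P[Y n (k+1) | ℱ k] := by
      intro k
      have h := hmarkov k (gcl n) (gcl_measurable n) ⟨1, hgb⟩
      rw [hYeq (k+1)] at h
      have hrhs : (fun ω => ∑ μ, if 0 < pMeas M (X k ω) μ then
          pMeas M (X k ω) μ * gcl n (MMap M μ (X k ω)) else 0) = Y n k :=
        funext fun ω => markov_g hQND hKraus (hD k ω).1 n
      rw [hrhs] at h
      exact h.symm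
    have hmart : Martingale (Y n) ℱ P := martingale_nat hadp hint hcond
    refine hmart.submartingale.ae_tendsto_limitProcess (R := 1) fun k => ?_
    have hb := eLpNorm_le_of_ae_bound (f := Y n k) (p := 1) (μ := P) (C := 1)
      (Filter.Eventually.of_forall fun ω => hYb k ω)
    simpa using hb
  -- Step B : for each pair, hcl → 0 a.s.
  have hZconv : ∀ n₁ n₂ : Fin d, n₁ ≠ n₂ → ∀ᵐ ω ∂P,
      Tendsto (fun k => hcl n₁ n₂ (X k ω)) atTop (𝓝 0) := by
    intro n₁ n₂ hne
    set γ : ℝ := ∑ μ, Real.sqrt (Complex.normSq (c μ n₁)) * Real.sqrt (Complex.normSq (c μ n₂))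
      with hγ
    have hγ0 : 0 ≤ γ := Finset.sum_nonneg fun μ _ =>
      mul_nonneg (Real.sqrt_nonneg _) (Real.sqrt_nonneg _)
    have hγ1 : γ < 1 :=
      gamma_lt_one (fun μ => Complex.normSq_nonneg _) (fun μ => Complex.normSq_nonneg _)
        (sum_a_eq_one hQND hKraus n₁) (sum_a_eq_one hQND hKraus n₂) (hdist n₁ n₂ hne)
    have hhb : ∀ ρ : Matrix (Fin d) (Fin d) ℂ, |hcl n₁ n₂ ρ| ≤ 1 := fun ρ => by
      rw [abs_of_nonneg hcl_nonneg]; exact hcl_le_one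
    have hintZ : ∀ k, Integrable (fun ω => hcl n₁ n₂ (X k ω)) P := fun k =>
      Integrable.mono' (integrable_const 1)
        ((hcl_measurable n₁ n₂).comp (hXmeas k)).aestronglyMeasurable
        (Filter.Eventually.of_forall fun ω => by
          rw [Real.norm_eq_abs]; exact hhb (X k ω))
    have hrec : ∀ k, ∫ ω, hcl n₁ n₂ (X (k+1) ω) ∂P ≤ γ * ∫ ω, hcl n₁ n₂ (X k ω) ∂P := by
      intro k
      have h := hmarkov k (hcl n₁ n₂) (hcl_measurable n₁ n₂) ⟨1, hhb⟩
      have h1 : ∫ ω, hcl n₁ n₂ (X (k+1) ω) ∂P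
          = ∫ ω, (P[(fun ω => hcl n₁ n₂ (X (k + 1) ω)) | ℱ k]) ω ∂P :=
        (integral_condExp (ℱ.le k)).symm
      have h2 : ∫ ω, (P[(fun ω => hcl n₁ n₂ (X (k + 1) ω)) | ℱ k]) ω ∂P
          = ∫ ω, (∑ μ, if 0 < pMeas M (X k ω) μ then
              pMeas M (X k ω) μ * hcl n₁ n₂ (MMap M μ (X k ω)) else 0) ∂P :=
        integral_congr_ae h
      have hintR : Integrable (fun ω => ∑ μ, if 0 < pMeas M (X k ω) μ then
          pMeas M (X k ω) μ * hcl n₁ n₂ (MMap M μ (X k ω)) else 0) P :=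
        integrable_condExp.congr h
      have h3 : ∫ ω, (∑ μ, if 0 < pMeas M (X k ω) μ then
            pMeas M (X k ω) μ * hcl n₁ n₂ (MMap M μ (X k ω)) else 0) ∂P
          ≤ ∫ ω, γ * hcl n₁ n₂ (X k ω) ∂P := by
        refine integral_mono hintR ((hintZ k).const_mul γ) fun ω => ?_
        exact markov_h hQND (hD k ω).1 (hD k ω).2 n₁ n₂
      rw [h1, h2, ← integral_const_mul]
      exact h3
    have hgeo : ∀ k, ∫ ω, hcl n₁ n₂ (X k ω) ∂P ≤ γ^k := by
      intro k
      induction k with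
      | zero =>
        simp only [pow_zero]
        calc ∫ ω, hcl n₁ n₂ (X 0 ω) ∂P ≤ ∫ _ω, (1:ℝ) ∂P :=
              integral_mono (hintZ 0) (integrable_const 1) fun ω => hcl_le_one
          _ = 1 := by simp
      | succ k ih =>
        calc ∫ ω, hcl n₁ n₂ (X (k+1) ω) ∂P ≤ γ * ∫ ω, hcl n₁ n₂ (X k ω) ∂P := hrec k
          _ ≤ γ * γ^k := mul_le_mul_of_nonneg_left ih hγ0
          _ = γ^(k+1) := by ring
    have hlint : ∀ k, ∫⁻ ω, ENNReal.ofReal (hcl n₁ n₂ (X k ω)) ∂P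
        = ENNReal.ofReal (∫ ω, hcl n₁ n₂ (X k ω) ∂P) := fun k =>
      (ofReal_integral_eq_lintegral_ofReal (hintZ k)
        (Filter.Eventually.of_forall fun ω => hcl_nonneg)).symm
    have hmeask : ∀ k : ℕ, Measurable fun ω => ENNReal.ofReal (hcl n₁ n₂ (X k ω)) := fun k =>
      ENNReal.measurable_ofReal.comp ((hcl_measurable n₁ n₂).comp (hXmeas k))
    have htsum : ∫⁻ ω, ∑' k, ENNReal.ofReal (hcl n₁ n₂ (X k ω)) ∂P ≠ ⊤ := by
      rw [lintegral_tsum fun k => (hmeask k).aemeasurable]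
      have hle : ∑' k, ∫⁻ ω, ENNReal.ofReal (hcl n₁ n₂ (X k ω)) ∂P
          ≤ ∑' k, ENNReal.ofReal (γ^k) := by
        refine ENNReal.tsum_le_tsum fun k => ?_
        rw [hlint k]
        exact ENNReal.ofReal_le_ofReal (hgeo k)
      have hgeosum : ∑' k : ℕ, ENNReal.ofReal (γ^k) ≠ ⊤ := by
        rw [← ENNReal.ofReal_tsum_of_nonneg (fun k => pow_nonneg hγ0 k)
          (summable_geometric_of_lt_one hγ0 hγ1)]
        exact ENNReal.ofReal_ne_top
      exact ne_top_of_le_ne_top hgeosum hle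
    have hfin : ∀ᵐ ω ∂P, ∑' k, ENNReal.ofReal (hcl n₁ n₂ (X k ω)) < ⊤ :=
      ae_lt_top (Measurable.ennreal_tsum hmeask) htsum
    filter_upwards [hfin] with ω hω
    have h2 := ENNReal.summable_toReal hω.ne
    have h3 : (fun k => (ENNReal.ofReal (hcl n₁ n₂ (X k ω))).toReal)
        = fun k => hcl n₁ n₂ (X k ω) :=
      funext fun k => ENNReal.toReal_ofReal hcl_nonneg
    rw [h3] at h2
    exact h2.tendsto_atTop_zero
  -- combine
  have hZconv' : ∀ᵐ ω ∂P, ∀ n₁ n₂ : Fin d, n₁ ≠ n₂ →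
      Tendsto (fun k => hcl n₁ n₂ (X k ω)) atTop (𝓝 0) := by
    rw [ae_all_iff]
    intro n₁
    rw [ae_all_iff]
    intro n₂
    by_cases h : n₁ = n₂
    · exact Filter.Eventually.of_forall fun ω hne => absurd h hne
    · filter_upwards [hZconv n₁ n₂ h] with ω hω _ using hω
  have hYconv' : ∀ᵐ ω ∂P, ∀ n : Fin d,
      Tendsto (fun k => Y n k ω) atTop (𝓝 (ℱ.limitProcess (Y n) P ω)) :=
    ae_all_iff.mpr hYconv
  filter_upwards [hYconv', hZconv'] with ω hconv hzero
  -- Step D : deterministic conclusion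
  set l : Fin d → ℝ := fun n => ℱ.limitProcess (Y n) P ω with hl
  have hq0 : ∀ k n, 0 ≤ Y n k ω := fun k n => psd_diag_nonneg' (hD k ω).1 n
  have hq1 : ∀ k n, Y n k ω ≤ 1 := fun k n => diag_le_one (hD k ω).1 (hD k ω).2 n
  have hl0 : ∀ n, 0 ≤ l n := fun n =>
    ge_of_tendsto (hconv n) (Filter.Eventually.of_forall fun k => hq0 k n)
  have hsum1 : ∑ n, l n = 1 := by
    have h1 : Tendsto (fun k => ∑ n, Y n k ω) atTop (𝓝 (∑ n, l n)) :=
      tendsto_finset_sum _ fun n _ => hconv n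
    have h2 : (fun k => ∑ n, Y n k ω) = fun _ => (1:ℝ) :=
      funext fun k => sum_diag_re (hD k ω).2
    rw [h2] at h1
    exact tendsto_nhds_unique h1 tendsto_const_nhds
  have hprod : ∀ n₁ n₂ : Fin d, n₁ ≠ n₂ → l n₁ * l n₂ = 0 := by
    intro n₁ n₂ hne
    have hhq : (fun k => hcl n₁ n₂ (X k ω) * hcl n₁ n₂ (X k ω))
        = fun k => Y n₁ k ω * Y n₂ k ω := by
      funext k
      unfold hcl
      rw [gcl_eq (hq0 k n₁) (hq1 k n₁), gcl_eq (hq0 k n₂) (hq1 k n₂),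
        Real.mul_self_sqrt (mul_nonneg (hq0 k n₁) (hq0 k n₂))]
    have h1 : Tendsto (fun k => Y n₁ k ω * Y n₂ k ω) atTop (𝓝 0) := by
      rw [← hhq]
      simpa using (hzero n₁ n₂ hne).mul (hzero n₁ n₂ hne)
    exact tendsto_nhds_unique ((hconv n₁).mul (hconv n₂)) h1
  have hex : ∃ n₀, l n₀ ≠ 0 := by
    by_contra h
    push_neg at h
    rw [Finset.sum_congr rfl (fun n _ => h n)] at hsum1
    simp at hsum1
  obtain ⟨n₀, hn₀⟩ := hex
  have hzero' : ∀ n, n ≠ n₀ → l n = 0 := by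
    intro n hn
    have := hprod n n₀ hn
    rcases mul_eq_zero.mp this with h | h
    · exact h
    · exact absurd h hn₀
  have hln₀ : l n₀ = 1 := by
    rw [← hsum1, Finset.sum_eq_single n₀ (fun n _ hn => hzero' n hn)
      (fun h => absurd (Finset.mem_univ n₀) h)]
  refine ⟨n₀, ?_⟩
  apply tendsto_pi_nhds.mpr
  intro i
  rw [tendsto_pi_nhds]
  intro j
  have hherm : ∀ k, (starRingEnd ℂ) ((X k ω) i j) = (X k ω) j i := by
    intro k
    have h := (hD k ω).1.isHermitian
    exact h.apply j i
  by_cases hij : i = j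
  · subst hij
    have him : ∀ k, ((X k ω) i i).im = 0 := by
      intro k
      have := hherm k
      have h2 := congrArg Complex.im this
      simp [Complex.conj_im] at h2
      linarith
    have hfe : (fun k => (X k ω) i i) = fun k => ((Y i k ω : ℝ) : ℂ) := by
      funext k
      apply Complex.ext
      · simp [hY]
      · simp [him k, hY]
    rw [hfe]
    have hc : Tendsto (fun k => ((Y i k ω : ℝ) : ℂ)) atTop (𝓝 ((l i : ℝ) : ℂ)) :=
      (Complex.continuous_ofReal.tendsto _).comp (hconv i)
    by_cases hi : i = n₀
    · subst hi
      rw [hln₀] at hc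
      simpa [Matrix.single_apply_same] using hc
    · rw [hzero' i hi] at hc
      have : Matrix.single n₀ n₀ (1:ℂ) i i = 0 := by
        rw [Matrix.single_apply_of_ne]
        tauto
      rw [this]
      simpa using hc
  · have hentry : Matrix.single n₀ n₀ (1:ℂ) i j = 0 := by
      rw [Matrix.single_apply_of_ne]
      rintro ⟨h1, h2⟩
      exact hij (h1.symm.trans h2)
    rw [hentry]
    refine squeeze_zero_norm (a := fun k => hcl i j (X k ω)) ?_ (hzero i j hij)
    · intro k
      have hb := psd_entry_sq (hD k ω).1 hij
      show ‖(X k ω) i j‖ ≤ hcl i j (X k ω)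
      unfold hcl
      rw [gcl_eq (hq0 k i) (hq1 k i), gcl_eq (hq0 k j) (hq1 k j)]
      rw [show ‖(X k ω) i j‖ = Real.sqrt (Complex.normSq ((X k ω) i j)) by
        rw [Complex.norm_def]]
      exact Real.sqrt_le_sqrt hb
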